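/- (Wold decomposition.) Let H be a complex Hilbert space and S : H → H a linear isometry. Let N = (range S)ᗮ be the orthogonal complement of the range of S, and let H_∞ = ⋂_{n ∈ ℕ} range(Sⁿ) (the intersection of the ranges of all iterates of S, each of which is a closed subspace). Then: (1) the subspaces Sᵐ(N) and Sⁿ(N) are mutually orthogonal for all m ≠ n; (2) S maps H_∞ bijectively onto H_∞ (so the restriction of S to H_∞ is a unitary operator on H_∞); (3) H_∞ is the orthogonal complement of the closed subspace spanned by the family {Sⁿ(N) : n ∈ ℕ}, so that H decomposes as the orthogonal direct sum H = H_∞ ⊕ closure(⊕_{n ∈ ℕ} Sⁿ(N)), on the second summand of which S acts as a unilateral shift. -/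
import Mathlib

open MeasureTheory

section aux

variable {H : Type*} [NormedAddCommGroup H] [InnerProductSpace ℂ H]
  [CompleteSpace H] (S : H →ₗᵢ[ℂ] H)

local notation "⟪" x ", " y "⟫" => @inner ℂ _ _ x y

private lemma pow_apply_aux (n : ℕ) (x : H) :
    (S.toLinearMap ^ n) x = S^[n] x := by
  exact Module.End.pow_apply _ n x

private lemma inner_pow_aux (n : ℕ) (x y : H) :
    ⟪(S.toLinearMap ^ n) x, (S.toLinearMap ^ n) y⟫ = ⟪x, y⟫ := by
  induction n with
  | zero => simp
  | succ k ih =>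
    rw [pow_succ', Module.End.mul_apply, Module.End.mul_apply]
    simpa [S.inner_map_map] using ih

private lemma mem_range_pow_succ_aux {n : ℕ} {x : H}
    (hx : x ∈ LinearMap.range (S.toLinearMap ^ n)) :
    S x ∈ LinearMap.range (S.toLinearMap ^ (n + 1)) := by
  obtain ⟨z, rfl⟩ := hx
  exact ⟨z, by rw [pow_succ', Module.End.mul_apply]; rfl⟩

private lemma range_closed : IsClosed (LinearMap.range S.toLinearMap : Set H) := by
  have : (LinearMap.range S.toLinearMap : Set H) = Set.range S := by
    ext x; simp [LinearMap.mem_range]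
  rw [this]
  exact S.isometry.isClosedEmbedding.isClosed_range

end aux

/-- Wold decomposition for an isometry `S` of a complex Hilbert space `H`.
With `N = (range S)ᗮ` and `H_∞ = ⋂ₙ range Sⁿ`:
(1) the subspaces `Sᵐ N` are mutually orthogonal;
(2) `S` maps `H_∞` onto itself (restricting to a unitary);
(3) `H_∞` is the orthogonal complement of the span of `{Sⁿ N : n ∈ ℕ}`. -/
theorem stmt_19 {H : Type*} [NormedAddCommGroup H] [InnerProductSpace ℂ H]
    [CompleteSpace H] (S : H →ₗᵢ[ℂ] H) :
    (∀ m n : ℕ, m ≠ n →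
      Submodule.IsOrtho
        (Submodule.map (S.toLinearMap ^ m) (LinearMap.range S.toLinearMap)ᗮ)
        (Submodule.map (S.toLinearMap ^ n) (LinearMap.range S.toLinearMap)ᗮ)) ∧
    (Submodule.map S.toLinearMap (⨅ n : ℕ, LinearMap.range (S.toLinearMap ^ n)) =
      ⨅ n : ℕ, LinearMap.range (S.toLinearMap ^ n)) ∧
    ((⨅ n : ℕ, LinearMap.range (S.toLinearMap ^ n)) =
      (⨆ n : ℕ, Submodule.map (S.toLinearMap ^ n)
        (LinearMap.range S.toLinearMap)ᗮ)ᗮ) := by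
  set T := S.toLinearMap with hT
  set N := (LinearMap.range T)ᗮ with hN
  -- key orthogonality: m < n
  have key : ∀ m n : ℕ, m < n →
      Submodule.IsOrtho (Submodule.map (T ^ m) N) (Submodule.map (T ^ n) N) := by
    intro m n hmn
    rw [Submodule.isOrtho_iff_inner_eq]
    rintro _ ⟨x, hx, rfl⟩ _ ⟨y, hy, rfl⟩
    obtain ⟨k, rfl⟩ : ∃ k, n = m + (k + 1) := ⟨n - m - 1, by omega⟩
    have h1 : (T ^ (m + (k + 1))) y = (T ^ m) ((T ^ (k + 1)) y) := by
      rw [pow_add]; rfl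
    rw [h1, inner_pow_aux S m]
    have hr : (T ^ (k + 1)) y ∈ LinearMap.range T :=
      ⟨(T ^ k) y, by rw [pow_succ', Module.End.mul_apply]⟩
    have := (Submodule.mem_orthogonal _ x).mp hx _ hr
    rw [← inner_conj_symm, this, map_zero]
  have inj : Function.Injective T := S.injective
  refine ⟨?_, ?_, ?_⟩
  · intro m n hmn
    rcases hmn.lt_or_gt with h | h
    · exact key m n h
    · exact (key n m h).symm
  · apply le_antisymm
    · rintro _ ⟨x, hx, rfl⟩
      rw [SetLike.mem_coe, Submodule.mem_iInf] at hx
      rw [Submodule.mem_iInf]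
      intro n
      cases n with
      | zero => exact ⟨T x, by rw [pow_zero]; rfl⟩
      | succ k => exact mem_range_pow_succ_aux S (hx k)
    · intro y hy
      rw [Submodule.mem_iInf] at hy
      obtain ⟨x, hx⟩ : y ∈ LinearMap.range T := by
        have := hy 1
        rwa [pow_one] at this
      refine ⟨x, ?_, hx⟩
      rw [SetLike.mem_coe, Submodule.mem_iInf]
      intro n
      obtain ⟨w, hw⟩ := hy (n + 1)
      rw [pow_succ', Module.End.mul_apply] at hw
      have : T ((T ^ n) w) = T x := by rw [hw, hx]
      exact ⟨w, inj this⟩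
  · -- part 3
    haveI : CompleteSpace (LinearMap.range T) := (range_closed S).completeSpace_coe
    have hNcc : Nᗮ = LinearMap.range T := by
      rw [hN]; exact Submodule.orthogonal_orthogonal _
    apply le_antisymm
    · have horth : (⨆ n : ℕ, Submodule.map (T ^ n) N) ⟂
          (⨅ n : ℕ, LinearMap.range (T ^ n)) := by
        rw [Submodule.isOrtho_iSup_left]
        intro n
        rw [Submodule.isOrtho_iff_inner_eq]
        rintro _ ⟨y, hy, rfl⟩ v hv
        have hv' : v ∈ LinearMap.range (T ^ (n + 1)) :=
          (Submodule.mem_iInf _).mp hv (n + 1)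
        obtain ⟨w, rfl⟩ := hv'
        have h2 : (T ^ (n + 1)) w = (T ^ n) (T w) := by
          rw [pow_succ, Module.End.mul_apply]
        rw [h2, inner_pow_aux S n]
        exact (Submodule.mem_orthogonal' _ _).mp hy _ ⟨w, rfl⟩
      exact horth.symm
    · intro x hx
      rw [Submodule.mem_iInf]
      intro n
      induction n with
      | zero => simp
      | succ k ih =>
        obtain ⟨z, rfl⟩ := ih
        have hz : z ∈ Nᗮ := by
          rw [Submodule.mem_orthogonal]
          intro y hy
          have h1 : (T ^ k) y ∈ ⨆ n : ℕ, Submodule.map (T ^ n) N :=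
            le_iSup (fun n => Submodule.map (T ^ n) N) k ⟨y, hy, rfl⟩
          have h2 := (Submodule.mem_orthogonal _ _).mp hx _ h1
          rwa [inner_pow_aux S k] at h2
        rw [hNcc] at hz
        obtain ⟨w, rfl⟩ := hz
        exact ⟨w, by rw [pow_succ, Module.End.mul_apply]⟩
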